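/- Swapping Lemma for Context-Free Languages: Let L be an infinite context-free language over an alphabet Σ with |Σ| ≥ 2. There is a positive constant m such that the following holds. For any n ≥ 2, any subset S ⊆ L ∩ Σⁿ, and any indices j₀, k ∈ [2, n] with k ≥ 2j₀, if |S_{i,u}| < |S| / (m(k−j₀+1)(n−j₀+1)) for every i ∈ [1, n−j₀] and every u ∈ Σ^{j₀}, then there exist indices i ∈ [1,n] and j ∈ [j₀, k] with i + j ≤ n and two strings x = x₁x₂x₃ and y = y₁y₂y₃ in S with |x₁| = |y₁| = i, |x₂| = |y₂| = j, |x₃| = |y₃| such that (i) x₂ ≠ y₂, (ii) x₁y₂x₃ ∈ L, and (iii) y₁x₂y₃ ∈ L. -/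

import Mathlib

namespace SwapCFL

open ContextFreeGrammar

universe uT uN
variable {T : Type}

/-- Parse-structure predicate: `Gen g s w` means symbol `s` yields terminal word `w`. -/
inductive Gen (g : ContextFreeGrammar T) : Symbol T g.NT → List T → Prop
  | term (a : T) : Gen g (Symbol.terminal a) [a]
  | rule (r : ContextFreeRule T g.NT) (hr : r ∈ g.rules) (ws : List (List T))
      (hl : ws.length = r.output.length)
      (h : ∀ p ∈ r.output.zip ws, Gen g p.1 p.2) :
      Gen g (Symbol.nonterminal r.input) ws.flatten

variable {g : ContextFreeGrammar T}

/-- forest version -/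
def GenStr (g : ContextFreeGrammar T) (α : List (Symbol T g.NT)) (w : List T) : Prop :=
  ∃ ws : List (List T), ws.length = α.length ∧ w = ws.flatten ∧
    ∀ p ∈ α.zip ws, Gen g p.1 p.2

lemma genStr_nil : GenStr g [] [] := ⟨[], by simp⟩

lemma genStr_cons {s : Symbol T g.NT} {α : List (Symbol T g.NT)} {u v : List T}
    (hs : Gen g s u) (hα : GenStr g α v) : GenStr g (s :: α) (u ++ v) := by
  obtain ⟨ws, hl, rfl, h⟩ := hα
  refine ⟨u :: ws, by simp [hl], by simp, ?_⟩
  intro p hp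
  rw [List.zip_cons_cons] at hp
  rcases List.mem_cons.1 hp with rfl | hp
  · exact hs
  · exact h _ hp

lemma genStr_append {α β : List (Symbol T g.NT)} {u v : List T}
    (hα : GenStr g α u) (hβ : GenStr g β v) : GenStr g (α ++ β) (u ++ v) := by
  obtain ⟨ws, hl, rfl, h⟩ := hα
  obtain ⟨vs, hl', rfl, h'⟩ := hβ
  refine ⟨ws ++ vs, by simp [hl, hl'], by simp, ?_⟩
  rw [List.zip_append (by rw [hl])]
  intro p hp
  rcases List.mem_append.1 hp with hp | hp
  · exact h _ hp
  · exact h' _ hp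

lemma genStr_singleton {s : Symbol T g.NT} {w : List T} (hs : Gen g s w) : GenStr g [s] w :=
  ⟨[w], by simp, by simp, by simpa using hs⟩

lemma genStr_singleton' {s : Symbol T g.NT} {w : List T} (hs : GenStr g [s] w) : Gen g s w := by
  obtain ⟨ws, hl, rfl, h⟩ := hs
  match ws, hl with
  | [u], _ => simpa using h (s, u) (by simp)

/-- split a forest along an append -/
lemma genStr_split {α β : List (Symbol T g.NT)} {w : List T}
    (h : GenStr g (α ++ β) w) : ∃ u v, w = u ++ v ∧ GenStr g α u ∧ GenStr g β v := by
  obtain ⟨ws, hl, rfl, h⟩ := h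
  have hw : ws = ws.take α.length ++ ws.drop α.length := (List.take_append_drop _ _).symm
  have hl₁ : (ws.take α.length).length = α.length := by
    rw [List.length_take, hl]; simp
  have hl₂ : (ws.drop α.length).length = β.length := by
    rw [List.length_drop, hl]; simp
  have hzip : (α ++ β).zip ws = α.zip (ws.take α.length) ++ β.zip (ws.drop α.length) := by
    conv_lhs => rw [hw]
    exact List.zip_append hl₁.symm
  refine ⟨(ws.take α.length).flatten, (ws.drop α.length).flatten,
    by conv_lhs => rw [hw, List.flatten_append],
    ⟨ws.take α.length, hl₁, rfl, ?_⟩, ⟨ws.drop α.length, hl₂, rfl, ?_⟩⟩ <;>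
    intro p hp <;> apply h <;> rw [hzip]
  · exact List.mem_append_left _ hp
  · exact List.mem_append_right _ hp

end SwapCFL
namespace SwapCFL
open ContextFreeGrammar
universe uT uN
variable {T : Type} {g : ContextFreeGrammar T}

lemma derives_flatten : ∀ (α : List (Symbol T g.NT)) (ws : List (List T)),
    ws.length = α.length → (∀ p ∈ α.zip ws, g.Derives [p.1] (p.2.map Symbol.terminal)) →
    g.Derives α ((ws.flatten).map Symbol.terminal)
  | [], [], _, _ => by simpa using Relation.ReflTransGen.refl
  | s :: α', u :: ws', hl, h => by
    have h1 : g.Derives [s] (u.map Symbol.terminal) := h (s, u) (by simp)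
    have h2 : g.Derives α' ((ws'.flatten).map Symbol.terminal) :=
      derives_flatten α' ws' (by simpa using hl) fun p hp => h p (by
        rw [List.zip_cons_cons]; exact List.mem_cons_of_mem _ hp)
    have : g.Derives ([s] ++ α') (u.map Symbol.terminal ++ (ws'.flatten).map Symbol.terminal) :=
      Derives.trans (h1.append_right α') (h2.append_left _)
    simpa using this

lemma Gen.derives {s : Symbol T g.NT} {w : List T} (h : Gen g s w) :
    g.Derives [s] (w.map Symbol.terminal) := by
  induction h with
  | term a => exact Derives.refl _
  | rule r hr ws hl h ih =>
    exact Derives.trans (Produces.single ⟨r, hr, ContextFreeRule.Rewrites.input_output⟩)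
      (derives_flatten r.output ws hl ih)

lemma GenStr.derives {α : List (Symbol T g.NT)} {w : List T} (h : GenStr g α w) :
    g.Derives α (w.map Symbol.terminal) := by
  obtain ⟨ws, hl, rfl, h⟩ := h
  exact derives_flatten α ws hl fun p hp => (h p hp).derives

lemma genStr_of_eq_terminals {α : List (Symbol T g.NT)} {w : List T}
    (h : α = w.map Symbol.terminal) : GenStr g α w := by
  subst h
  induction w with
  | nil => exact genStr_nil
  | cons a w ih =>
    have := genStr_cons (Gen.term (g := g) a) ih
    simpa using this

lemma derives_genStr {α : List (Symbol T g.NT)} {w : List T}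
    (h : g.Derives α (w.map Symbol.terminal)) : GenStr g α w := by
  induction h using Relation.ReflTransGen.head_induction_on with
  | refl => exact genStr_of_eq_terminals rfl
  | head hp _ ih =>
    obtain ⟨r, hr, hrw⟩ := hp
    obtain ⟨p, q, rfl, rfl⟩ := hrw.exists_parts
    obtain ⟨u, rest, rfl, hu, hrest⟩ := genStr_split (by simpa using ih :
      GenStr g (p ++ (r.output ++ q)) w)
    obtain ⟨v, vv, rfl, hv, hvv⟩ := genStr_split hrest
    have hgen : Gen g (Symbol.nonterminal r.input) v := by
      obtain ⟨ws, hl, rfl, hws⟩ := hv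
      exact Gen.rule r hr ws hl hws
    have := genStr_append (genStr_append hu (genStr_singleton hgen)) hvv
    simpa using this

end SwapCFL
namespace SwapCFL
open ContextFreeGrammar
universe uT uN
variable {T : Type}

section Binarize
variable {N : Type uN}

/-- embedding of symbols into the binarized grammar's symbols -/
def emb : Symbol T N → Symbol T (List (Symbol T N))
  | .terminal a => .terminal a
  | .nonterminal A => .nonterminal [Symbol.nonterminal A]

/-- binarized right-hand side -/
def bsplit : List (Symbol T N) → List (Symbol T (List (Symbol T N)))
  | [] => []
  | [s] => [emb s]
  | [s₁, s₂] => [emb s₁, emb s₂]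
  | s :: rest => [emb s, Symbol.nonterminal rest]

lemma bsplit_length_le (ℓ : List (Symbol T N)) : (bsplit ℓ).length ≤ 2 := by
  match ℓ with
  | [] => simp [bsplit]
  | [s] => simp [bsplit]
  | [s₁, s₂] => simp [bsplit]
  | s :: s' :: s'' :: rest => simp [bsplit]

lemma bsplit_of_long (s s' s'' : Symbol T N) (rest : List (Symbol T N)) :
    bsplit (s :: s' :: s'' :: rest) = [emb s, Symbol.nonterminal (s' :: s'' :: rest)] := rfl

end Binarize

variable (g : ContextFreeGrammar T)

/-- the main rule for an original rule -/
def mainRule (r : ContextFreeRule T g.NT) : ContextFreeRule T (List (Symbol T g.NT)) :=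
  ⟨[Symbol.nonterminal r.input], bsplit r.output⟩

/-- chain rules for the tails -/
def chainRules (r : ContextFreeRule T g.NT) : List (ContextFreeRule T (List (Symbol T g.NT))) :=
  (r.output.tails.filter (fun l => 2 ≤ l.length)).map (fun l => ⟨l, bsplit l⟩)

open Classical in
/-- the binarized grammar -/
noncomputable def bin : ContextFreeGrammar T :=
  ⟨List (Symbol T g.NT), [Symbol.nonterminal g.initial],
    g.rules.biUnion (fun r => insert (mainRule g r) (chainRules g r).toFinset)⟩

lemma mem_bin_rules {r' : ContextFreeRule T (List (Symbol T g.NT))} :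
    r' ∈ (bin g).rules ↔ ∃ r ∈ g.rules, r' = mainRule g r ∨ r' ∈ chainRules g r := by
  classical
  simp only [bin, Finset.mem_biUnion, Finset.mem_insert, List.mem_toFinset]
  exact ⟨fun h => by obtain ⟨r, hr, h⟩ := Finset.mem_biUnion.1 h; exact ⟨r, hr, by simpa using h⟩,
    fun ⟨r, hr, h⟩ => Finset.mem_biUnion.2 ⟨r, hr, by simpa using h⟩⟩

lemma bin_binary {r' : ContextFreeRule T (List (Symbol T g.NT))} (h : r' ∈ (bin g).rules) :
    r'.output.length ≤ 2 := by
  rw [mem_bin_rules] at h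
  obtain ⟨r, hr, rfl | h⟩ := h
  · exact bsplit_length_le _
  · obtain ⟨l, -, rfl⟩ : ∃ l, (l <:+ r.output ∧ 2 ≤ l.length) ∧
        (⟨l, bsplit l⟩ : ContextFreeRule T _) = r' := by simpa [chainRules] using h
    exact bsplit_length_le _

end SwapCFL
namespace SwapCFL
open ContextFreeGrammar
universe uT uN
variable {T : Type} (g : ContextFreeGrammar T)

lemma mainRule_mem {r : ContextFreeRule T g.NT} (hr : r ∈ g.rules) :
    mainRule g r ∈ (bin g).rules :=
  (mem_bin_rules g).2 ⟨r, hr, Or.inl rfl⟩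

lemma chainRule_mem {r : ContextFreeRule T g.NT} (hr : r ∈ g.rules)
    {l : List (Symbol T g.NT)} (h1 : l <:+ r.output) (h2 : 2 ≤ l.length) :
    (⟨l, bsplit l⟩ : ContextFreeRule T (List (Symbol T g.NT))) ∈ (bin g).rules :=
  (mem_bin_rules g).2 ⟨r, hr, Or.inr (by
    simp only [chainRules, List.mem_map, List.mem_filter, List.mem_tails]
    exact ⟨l, ⟨h1, by simpa using h2⟩, rfl⟩)⟩

lemma bsplit_derives {r : ContextFreeRule T g.NT} (hr : r ∈ g.rules) :
    ∀ (l : List (Symbol T g.NT)), l <:+ r.output →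
      (bin g).Derives (bsplit l) (l.map emb)
  | [], _ => by exact Relation.ReflTransGen.refl
  | [s], _ => by exact Relation.ReflTransGen.refl
  | [s₁, s₂], _ => by exact Relation.ReflTransGen.refl
  | s :: s' :: s'' :: rest, h => by
    have htail : (s' :: s'' :: rest) <:+ r.output :=
      (List.suffix_cons s (s' :: s'' :: rest)).trans h
    have hrule := chainRule_mem g hr htail (by simp)
    have hstep : (bin g).Produces [Symbol.nonterminal (s' :: s'' :: rest)]
        (bsplit (s' :: s'' :: rest)) :=
      ⟨_, hrule, ContextFreeRule.Rewrites.input_output⟩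
    have := (hstep.trans_derives (bsplit_derives hr (s' :: s'' :: rest) htail)).append_left
      [emb s]
    rw [bsplit_of_long]
    exact this

lemma produces_bin {α β : List (Symbol T g.NT)} (h : g.Produces α β) :
    (bin g).Derives (α.map emb) (β.map emb) := by
  obtain ⟨r, hr, hrw⟩ := h
  obtain ⟨p, q, rfl, rfl⟩ := hrw.exists_parts
  have hstep : (bin g).Produces
      (p.map emb ++ [Symbol.nonterminal [Symbol.nonterminal r.input]] ++ q.map emb)
      (p.map emb ++ bsplit r.output ++ q.map emb) := by
    refine ⟨mainRule g r, mainRule_mem g hr, ?_⟩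
    exact ContextFreeRule.rewrites_of_exists_parts _ _ _
  have hder := ((bsplit_derives g hr r.output (List.suffix_refl _)).append_left
      (p.map emb)).append_right (q.map emb)
  have := hstep.trans_derives hder
  have e1 : (p ++ [Symbol.nonterminal r.input] ++ q).map emb
      = p.map emb ++ [Symbol.nonterminal [Symbol.nonterminal r.input]] ++ q.map emb := by
    simp [emb]
  have e2 : (p ++ r.output ++ q).map emb = p.map emb ++ r.output.map emb ++ q.map emb := by
    simp
  exact (congrArg₂ (bin g).Derives e1 e2).mpr this

lemma derives_bin {α β : List (Symbol T g.NT)} (h : g.Derives α β) :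
    (bin g).Derives (α.map emb) (β.map emb) := by
  induction h with
  | refl => rfl
  | tail _ hstep ih => exact ih.trans (produces_bin g hstep)

/-- interpretation of binarized symbols back to sentential forms -/
def interp {N : Type uN} : Symbol T (List (Symbol T N)) → List (Symbol T N)
  | .terminal a => [.terminal a]
  | .nonterminal l => l

lemma interp_emb {N : Type uN} (s : Symbol T N) : interp (emb s) = [s] := by
  cases s <;> rfl

lemma interp_nonterminal {N : Type uN} (l : List (Symbol T N)) :
    interp (Symbol.nonterminal l : Symbol T (List (Symbol T N))) = l := rfl

lemma interp_terminals {N : Type uN} (x : List T) :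
    (List.map Symbol.terminal x : List (Symbol T (List (Symbol T N)))).flatMap interp
      = List.map Symbol.terminal x := by
  induction x with
  | nil => rfl
  | cons a x ih => simpa [interp] using ih

lemma interp_bsplit {N : Type uN} (l : List (Symbol T N)) :
    (bsplit l).flatMap interp = l := by
  match l with
  | [] => rfl
  | [s] => simp [bsplit, interp_emb]
  | [s₁, s₂] => simp [bsplit, interp_emb]
  | s :: s' :: s'' :: rest => simp [bsplit_of_long, interp_emb, interp_nonterminal]

lemma rewrites_interp {r' : ContextFreeRule T (List (Symbol T g.NT))}
    (hr' : r' ∈ (bin g).rules) :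
    ∀ {u v : List (Symbol T (List (Symbol T g.NT)))}, r'.Rewrites u v →
      g.Derives (u.flatMap interp) (v.flatMap interp) := by
  intro u v hrw
  induction hrw with
  | head s =>
    rw [List.flatMap_cons, List.flatMap_append]
    obtain ⟨r, hr, hmain | hchain⟩ := (mem_bin_rules g).1 hr'
    · subst hmain
      have hstep : g.Produces ([Symbol.nonterminal r.input] ++ s.flatMap interp)
          (r.output ++ s.flatMap interp) :=
        ⟨r, hr, ContextFreeRule.Rewrites.input_output.append_right _⟩
      have h2 := hstep.single
      simpa [mainRule, interp, interp_bsplit] using h2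
    · obtain ⟨l, -, rfl⟩ : ∃ l, (l <:+ r.output ∧ 2 ≤ l.length) ∧
          (⟨l, bsplit l⟩ : ContextFreeRule T _) = r' := by simpa [chainRules] using hchain
      have : (interp (Symbol.nonterminal l : Symbol T (List (Symbol T g.NT)))
          ++ s.flatMap interp : List (Symbol T g.NT))
          = (bsplit l ++ s).flatMap interp := by
        simp [interp, interp_bsplit]
      rw [this, List.flatMap_append]
  | cons x hrs ih =>
    rw [List.flatMap_cons, List.flatMap_cons]
    exact ih.append_left _

lemma produces_interp {α β : List (Symbol T (List (Symbol T g.NT)))}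
    (h : (bin g).Produces α β) :
    g.Derives (α.flatMap interp) (β.flatMap interp) := by
  obtain ⟨r', hr', hrw⟩ := h
  exact rewrites_interp g hr' hrw

lemma derives_interp {α β : List (Symbol T (List (Symbol T g.NT)))}
    (h : (bin g).Derives α β) :
    g.Derives (α.flatMap interp) (β.flatMap interp) := by
  induction h with
  | refl => rfl
  | tail _ hstep ih => exact ih.trans (produces_interp g hstep)

lemma bin_language : (bin g).language = g.language := by
  ext x
  rw [mem_language_iff, mem_language_iff]
  constructor
  · intro h
    have := derives_interp g h
    erw [interp_terminals] at this
    exact this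
  · intro h
    have := derives_bin g h
    have hts : (List.map Symbol.terminal x).map emb
        = (List.map Symbol.terminal x : List (Symbol T (bin g).NT)) := by
      simp [emb]
      rfl
    erw [hts] at this
    exact this

end SwapCFL
namespace SwapCFL
open ContextFreeGrammar
universe uT uN
variable {T : Type}

open Classical in
/-- nonterminals occurring in rule outputs -/
noncomputable def outNTs (g' : ContextFreeGrammar T) : Finset g'.NT :=
  (g'.rules.toList.flatMap (fun r => r.output.filterMap (fun s => match s with
    | Symbol.nonterminal B => some B
    | _ => none))).toFinset

lemma mem_outNTs {g' : ContextFreeGrammar T} {r : ContextFreeRule T g'.NT}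
    (hr : r ∈ g'.rules) {B : g'.NT} (h : Symbol.nonterminal B ∈ r.output) :
    B ∈ outNTs g' := by
  classical
  simp only [outNTs, List.mem_toFinset, List.mem_flatMap]
  exact ⟨r, by simpa using hr, List.mem_filterMap.2 ⟨Symbol.nonterminal B, h, rfl⟩⟩

lemma descend (g' : ContextFreeGrammar T)
    (hbin : ∀ r ∈ g'.rules, r.output.length ≤ 2)
    (j₀ k' : ℕ) (hj₀ : 2 ≤ j₀) (hk' : 2 * j₀ ≤ k' + 1) :
    ∀ {s : Symbol T g'.NT} {w : List T}, Gen g' s w → k' < w.length →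
    ∃ (A : g'.NT) (w₁ w₂ w₃ : List T), w = w₁ ++ w₂ ++ w₃ ∧ j₀ ≤ w₂.length ∧
      w₂.length ≤ k' ∧ (1 ≤ w₁.length ∨ j₀ + 1 ≤ w₂.length) ∧ A ∈ outNTs g' ∧
      g'.Derives [s] (w₁.map Symbol.terminal ++ [Symbol.nonterminal A]
        ++ w₃.map Symbol.terminal) ∧ Gen g' (Symbol.nonterminal A) w₂ := by
  intro s w hgen
  induction hgen with
  | term a => intro hlen; simp at hlen; omega
  | rule r hr ws hl h ih =>
    intro hlen
    have hstep0 : g'.Produces [Symbol.nonterminal r.input] r.output :=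
      ⟨r, hr, ContextFreeRule.Rewrites.input_output⟩
    have hb := hbin r hr
    rcases ho : r.output with _ | ⟨s₁, l₁⟩
    · rw [ho] at hl
      have : ws = [] := List.length_eq_zero_iff.1 (by simpa using hl)
      subst this
      simp at hlen
    rcases hol : l₁ with _ | ⟨s₂, l₂⟩
    · -- output = [s₁]
      subst hol
      rw [ho] at hl h ih
      obtain ⟨w₁, rfl⟩ := List.length_eq_one_iff.1 (by simpa using hl)
      have hg1 : Gen g' s₁ w₁ := h (s₁, w₁) (by simp)
      have hlen1 : k' < w₁.length := by simpa using hlen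
      match s₁, hg1 with
      | Symbol.terminal a, hg1 =>
        cases hg1; simp at hlen1; omega
      | Symbol.nonterminal B, hg1 =>
        obtain ⟨A, u₁, u₂, u₃, hw, h1, h2, h3, h4, h5, h6⟩ :=
          ih (Symbol.nonterminal B, w₁) (by simp) hlen1
        refine ⟨A, u₁, u₂, u₃, by simpa using hw, h1, h2, h3, h4, ?_, h6⟩
        refine hstep0.trans_derives ?_
        rw [ho]
        simpa using h5
    · -- output = [s₁, s₂] (l₂ = [] since length ≤ 2)
      subst hol
      have hl2 : l₂ = [] := by
        rw [ho] at hb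
        simp only [List.length_cons] at hb
        exact List.length_eq_zero_iff.1 (by omega)
      subst hl2
      rw [ho] at hl h ih
      obtain ⟨w₁, w₂, rfl⟩ := List.length_eq_two.1 (by simpa using hl)
      have hg1 : Gen g' s₁ w₁ := h (s₁, w₁) (by simp)
      have hg2 : Gen g' s₂ w₂ := h (s₂, w₂) (by simp)
      have hw : List.flatten [w₁, w₂] = w₁ ++ w₂ := by simp
      rw [hw] at hlen ⊢
      have hlen2 : k' < w₁.length + w₂.length := by simpa using hlen
      by_cases hc1 : j₀ ≤ w₂.length
      · -- right child is big
        match s₂, hg2 with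
        | Symbol.terminal a, hg2 =>
          cases hg2; simp at hc1; omega
        | Symbol.nonterminal B, hg2 =>
          by_cases hc2 : w₂.length ≤ k'
          · refine ⟨B, w₁, w₂, [], by simp, hc1, hc2, Or.inl (by omega),
              mem_outNTs hr (by rw [ho]; simp), ?_, hg2⟩
            refine hstep0.trans_derives ?_
            rw [ho]
            have := (hg1.derives).append_right [Symbol.nonterminal B]
            simpa using this
          · obtain ⟨A, u₁, u₂, u₃, hweq, h1, h2, h3, h4, h5, h6⟩ :=
              ih (Symbol.nonterminal B, w₂) (by simp) (not_le.mp hc2)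
            dsimp only at hweq h5
            refine ⟨A, w₁ ++ u₁, u₂, u₃, by rw [hweq]; simp, h1, h2, ?_, h4, ?_, h6⟩
            · rcases h3 with h3 | h3
              · exact Or.inl (by simp only [List.length_append]; omega)
              · exact Or.inr h3
            · refine hstep0.trans_derives ?_
              rw [ho]
              have step2 : g'.Derives [s₁, Symbol.nonterminal B]
                  (w₁.map Symbol.terminal ++ [Symbol.nonterminal B]) := by
                have := (hg1.derives).append_right [Symbol.nonterminal B]
                simpa using this
              refine step2.trans ?_
              have := h5.append_left (w₁.map Symbol.terminal)
              simpa [List.append_assoc] using this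
      · -- left child is big
        have hw1 : j₀ + 1 ≤ w₁.length := by omega
        match s₁, hg1 with
        | Symbol.terminal a, hg1 =>
          cases hg1; simp at hw1; omega
        | Symbol.nonterminal B, hg1 =>
          by_cases hc2 : w₁.length ≤ k'
          · refine ⟨B, [], w₁, w₂, by simp, by omega, hc2, Or.inr hw1,
              mem_outNTs hr (by rw [ho]; simp), ?_, hg1⟩
            refine hstep0.trans_derives ?_
            rw [ho]
            have := (hg2.derives).append_left [Symbol.nonterminal B]
            simpa using this
          · obtain ⟨A, u₁, u₂, u₃, hweq, h1, h2, h3, h4, h5, h6⟩ :=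
              ih (Symbol.nonterminal B, w₁) (by simp) (not_le.mp hc2)
            dsimp only at hweq h5
            refine ⟨A, u₁, u₂, u₃ ++ w₂, by rw [hweq]; simp, h1, h2, h3, h4, ?_, h6⟩
            refine hstep0.trans_derives ?_
            rw [ho]
            have step2 : g'.Derives [Symbol.nonterminal B, s₂]
                (u₁.map Symbol.terminal ++ [Symbol.nonterminal A]
                  ++ u₃.map Symbol.terminal ++ [s₂]) := by
              have := h5.append_right [s₂]
              simpa [List.append_assoc] using this
            refine step2.trans ?_
            have := (hg2.derives).append_left
              (u₁.map Symbol.terminal ++ [Symbol.nonterminal A] ++ u₃.map Symbol.terminal)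
            simpa [List.append_assoc] using this

end SwapCFL

open SwapCFL ContextFreeGrammar

/-- **Swapping Lemma for context-free languages.**
Let `L` be an infinite context-free language over a finite alphabet `σ` with
`|σ| ≥ 2`.  There is a constant `m > 0` such that for every `n ≥ 2`, every
`S ⊆ L ∩ σⁿ`, and all indices `j₀, k ∈ [2, n]` with `k ≥ 2j₀`: if
`|S_{i,u}| < |S| / (m(k-j₀+1)(n-j₀+1))` for every `i ∈ [1, n-j₀]` and every
`u ∈ σ^{j₀}` (where `S_{i,u} = {x ∈ S : midd_{i,i+j₀}(x) = u}`; the division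
is expressed multiplicatively), then there exist `i ∈ [1,n]` and
`j ∈ [j₀, k]` with `i + j ≤ n` and strings `x, y ∈ S` whose decompositions
`x = x₁x₂x₃`, `y = y₁y₂y₃` with `|x₁| = |y₁| = i`, `|x₂| = |y₂| = j` satisfy
`x₂ ≠ y₂`, `x₁y₂x₃ ∈ L` and `y₁x₂y₃ ∈ L`. -/
theorem swapping_lemma_contextFree {σ : Type} [Fintype σ] [DecidableEq σ]
    (hσ : 2 ≤ Fintype.card σ)
    (L : Language σ) (hL : L.IsContextFree) (hinf : Set.Infinite (L : Set (List σ))) :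
    ∃ m : ℕ, 0 < m ∧
      ∀ n : ℕ, 2 ≤ n →
      ∀ S : Finset (List σ), (∀ x ∈ S, x ∈ L ∧ x.length = n) →
      ∀ j₀ k : ℕ, 2 ≤ j₀ → j₀ ≤ n → 2 * j₀ ≤ k → k ≤ n →
      (∀ i : ℕ, 1 ≤ i → i ≤ n - j₀ → ∀ u : List σ, u.length = j₀ →
        (S.filter (fun x : List σ => (x.drop i).take j₀ = u)).card
            * (m * (k - j₀ + 1) * (n - j₀ + 1)) < S.card) →
      ∃ i j : ℕ, 1 ≤ i ∧ i ≤ n ∧ j₀ ≤ j ∧ j ≤ k ∧ i + j ≤ n ∧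
        ∃ x ∈ S, ∃ y ∈ S,
          (x.drop i).take j ≠ (y.drop i).take j ∧
          (x.take i ++ (y.drop i).take j ++ x.drop (i + j)) ∈ L ∧
          (y.take i ++ (x.drop i).take j ++ y.drop (i + j)) ∈ L := by
  classical
  obtain ⟨g₀, hg₀⟩ := hL
  set G := bin g₀ with hG
  have hlang : G.language = L := by rw [hG, bin_language]; exact hg₀
  set NC := (outNTs G).card with hNC
  refine ⟨Fintype.card σ * NC + 1, Nat.succ_pos _, ?_⟩
  intro n hn S hS j₀ k hj₀ hj₀n hk hkn H
  set m := Fintype.card σ * NC + 1 with hm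
  set M := m * (k - j₀ + 1) * (n - j₀ + 1) with hM
  have hkn' : 2 * j₀ ≤ n := le_trans hk hkn
  -- S is nonempty
  have hSpos : 0 < S.card := by
    obtain ⟨a⟩ : Nonempty σ := Fintype.card_pos_iff.mp (by omega)
    have := H 1 le_rfl (by omega) (List.replicate j₀ a) (by simp)
    omega
  set k' := min k (n - 1) with hk'
  have hk'k : k' ≤ k := min_le_left _ _
  have hk'big : 2 * j₀ ≤ k' + 1 := by omega
  have hk'n : k' < n := by omega
  -- the descent data
  have hMain : ∀ x : List σ, ∃ t : G.NT × ℕ × ℕ, x ∈ S →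
      (t.1 ∈ outNTs G ∧ j₀ ≤ t.2.2 ∧ t.2.2 ≤ k' ∧ t.2.1 + t.2.2 ≤ n ∧
        (1 ≤ t.2.1 ∨ j₀ + 1 ≤ t.2.2) ∧
        G.Derives [Symbol.nonterminal G.initial]
          ((x.take t.2.1).map Symbol.terminal ++ [Symbol.nonterminal t.1]
            ++ (x.drop (t.2.1 + t.2.2)).map Symbol.terminal) ∧
        G.Derives [Symbol.nonterminal t.1]
          (((x.drop t.2.1).take t.2.2).map Symbol.terminal)) := by
    intro x
    by_cases hx : x ∈ S
    swap
    · exact ⟨⟨G.initial, 0, 0⟩, fun h => absurd h hx⟩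
    obtain ⟨hxL, hxlen⟩ := hS x hx
    have hxG : G.Derives [Symbol.nonterminal G.initial] (x.map Symbol.terminal) := by
      rw [← mem_language_iff, hlang]; exact hxL
    have hgen : Gen G (Symbol.nonterminal G.initial) x :=
      genStr_singleton' (derives_genStr hxG)
    obtain ⟨A, w₁, w₂, w₃, hw, h1, h2, h3, h4, h5, h6⟩ :=
      descend G (fun r hr => bin_binary g₀ hr) j₀ k' hj₀ hk'big hgen
        (by rw [hxlen]; exact hk'n)
    refine ⟨⟨A, w₁.length, w₂.length⟩, fun _ => ⟨h4, h1, h2, ?_, h3, ?_, ?_⟩⟩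
    · show w₁.length + w₂.length ≤ n
      have := congrArg List.length hw
      simp only [List.length_append] at this
      omega
    · have ht : x.take w₁.length = w₁ := by
        rw [hw, List.append_assoc, List.take_left]
      have hd : x.drop (w₁.length + w₂.length) = w₃ := by
        conv_lhs => rw [hw, ← List.length_append (as := w₁) (bs := w₂)]
        exact List.drop_left
      rw [ht, hd]; exact h5
    · have hmid : (x.drop w₁.length).take w₂.length = w₂ := by
        rw [hw, List.append_assoc, List.drop_left, List.take_left]
      rw [hmid]; exact h6.derives
  choose f hf using hMain
  set T' := S.image f with hT'
  have hcardsum : S.card = ∑ t ∈ T', (S.filter fun x => f x = t).card :=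
    Finset.card_eq_sum_card_fiberwise (fun x hx => Finset.mem_image_of_mem f hx)
  have hTsub : T' ⊆ (outNTs G) ×ˢ (Finset.range (n - j₀ + 1) ×ˢ Finset.Icc j₀ k) := by
    intro t ht
    obtain ⟨x, hxS, rfl⟩ := Finset.mem_image.1 ht
    obtain ⟨hA, hj1, hj2, hij, -, -, -⟩ := hf x hxS
    simp only [Finset.mem_product, Finset.mem_range, Finset.mem_Icc]
    exact ⟨hA, by omega, hj1, by omega⟩
  have hTcard : T'.card ≤ NC * ((n - j₀ + 1) * (k - j₀ + 1)) := by
    have := Finset.card_le_card hTsub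
    rw [Finset.card_product, Finset.card_product, Finset.card_range, Nat.card_Icc] at this
    have hIcc : k + 1 - j₀ = k - j₀ + 1 := by omega
    rw [hIcc] at this
    exact this
  have hTne : T'.Nonempty := (Finset.card_pos.mp hSpos).image f
  obtain ⟨t, htT, hle⟩ : ∃ t ∈ T', S.card ≤ T'.card * (S.filter fun x => f x = t).card := by
    apply Finset.exists_le_of_sum_le hTne
    rw [← Finset.mul_sum, ← hcardsum, Finset.sum_const, smul_eq_mul]
  obtain ⟨A, i, j⟩ := t
  set C := S.filter (fun x => f x = (A, i, j)) with hC
  obtain ⟨x₀, hx₀S, hfx₀⟩ := Finset.mem_image.1 htT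
  have hx₀C : x₀ ∈ C := Finset.mem_filter.2 ⟨hx₀S, hfx₀⟩
  have hCpos : 0 < C.card := Finset.card_pos.2 ⟨x₀, hx₀C⟩
  have hprops : ∀ x ∈ C, A ∈ outNTs G ∧ j₀ ≤ j ∧ j ≤ k' ∧ i + j ≤ n ∧
      (1 ≤ i ∨ j₀ + 1 ≤ j) ∧
      G.Derives [Symbol.nonterminal G.initial]
        ((x.take i).map Symbol.terminal ++ [Symbol.nonterminal A]
          ++ (x.drop (i + j)).map Symbol.terminal) ∧
      G.Derives [Symbol.nonterminal A] (((x.drop i).take j).map Symbol.terminal) := by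
    intro x hx
    obtain ⟨hxS, hfx⟩ := Finset.mem_filter.1 hx
    have := hf x hxS
    rw [hfx] at this
    exact this
  obtain ⟨-, hj₀j, hjk', hijn, hdisj, -, -⟩ := hprops x₀ hx₀C
  -- the swapping property
  have hswap : ∀ x ∈ C, ∀ y ∈ C,
      (x.take i ++ (y.drop i).take j ++ x.drop (i + j)) ∈ L := by
    intro x hx y hy
    obtain ⟨-, -, -, -, -, hDx, -⟩ := hprops x hx
    obtain ⟨-, -, -, -, -, -, hGy⟩ := hprops y hy
    have hmidrep := (hGy.append_right ((x.drop (i + j)).map Symbol.terminal)).append_left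
      ((x.take i).map Symbol.terminal)
    have : G.Derives [Symbol.nonterminal G.initial]
        ((x.take i).map Symbol.terminal ++ ((y.drop i).take j).map Symbol.terminal
          ++ (x.drop (i + j)).map Symbol.terminal) := by
      refine hDx.trans ?_
      simpa [List.append_assoc] using hmidrep
    rw [← hlang, mem_language_iff]
    simpa [List.map_append, List.append_assoc] using this
  have hSB : S.card ≤ NC * ((n - j₀ + 1) * (k - j₀ + 1)) * C.card :=
    le_trans hle (Nat.mul_le_mul_right C.card hTcard)
  rcases hdisj with hi1 | hj1
  · -- case i ≥ 1
    by_cases hdiff : ∃ x ∈ C, ∃ y ∈ C, (x.drop i).take j ≠ (y.drop i).take j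
    · obtain ⟨x, hx, y, hy, hne⟩ := hdiff
      exact ⟨i, j, hi1, by omega, hj₀j, by omega, hijn, x, (Finset.mem_filter.1 hx).1,
        y, (Finset.mem_filter.1 hy).1, hne, hswap x hx y hy, hswap y hy x hx⟩
    · exfalso
      push_neg at hdiff
      set u := (x₀.drop i).take j₀ with hu
      have hulen : u.length = j₀ := by
        rw [hu, List.length_take, List.length_drop, (hS x₀ hx₀S).2]; omega
      have hsub : C ⊆ S.filter (fun x => (x.drop i).take j₀ = u) := by
        intro x hx
        refine Finset.mem_filter.2 ⟨(Finset.mem_filter.1 hx).1, ?_⟩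
        have hxx := hdiff x hx x₀ hx₀C
        have h1 : (x.drop i).take j₀ = ((x.drop i).take j).take j₀ := by
          rw [List.take_take]; congr 1; omega
        have h2 : (x₀.drop i).take j₀ = ((x₀.drop i).take j).take j₀ := by
          rw [List.take_take]; congr 1; omega
        rw [hu, h1, h2, hxx]
      have hfle : C.card ≤ (S.filter (fun x => (x.drop i).take j₀ = u)).card :=
        Finset.card_le_card hsub
      have hH := H i hi1 (by omega) u hulen
      have hBM : NC * ((n - j₀ + 1) * (k - j₀ + 1)) ≤ m * (k - j₀ + 1) * (n - j₀ + 1) := by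
        have h1 : NC ≤ m := by
          have : NC ≤ Fintype.card σ * NC := Nat.le_mul_of_pos_left NC (by omega)
          omega
        calc NC * ((n - j₀ + 1) * (k - j₀ + 1))
            ≤ m * ((n - j₀ + 1) * (k - j₀ + 1)) := Nat.mul_le_mul_right _ h1
          _ = m * (k - j₀ + 1) * (n - j₀ + 1) := by ring
      have : S.card < S.card := by
        calc S.card ≤ NC * ((n - j₀ + 1) * (k - j₀ + 1)) * C.card := hSB
          _ ≤ (m * (k - j₀ + 1) * (n - j₀ + 1))
              * (S.filter (fun x => (x.drop i).take j₀ = u)).card :=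
            Nat.mul_le_mul hBM hfle
          _ = (S.filter (fun x => (x.drop i).take j₀ = u)).card * M := by rw [hM]; ring
          _ < S.card := hH
      omega
  · -- case j ≥ j₀ + 1
    have hin : i + 1 + (j - 1) = i + j := by omega
    have hshift : ∀ x y : List σ, (x.drop i).take 1 = (y.drop i).take 1 →
        x.take (i+1) ++ (y.drop (i+1)).take (j-1) ++ x.drop (i+1+(j-1))
          = x.take i ++ (y.drop i).take j ++ x.drop (i+j) := by
      intro x y hxy
      rw [hin]
      have e1 : x.take (i+1) = x.take i ++ (x.drop i).take 1 := List.take_add (l := x) (i := i) (j := 1)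
      have e2 : (y.drop i).take j = (y.drop i).take 1 ++ ((y.drop i).drop 1).take (j-1) := by
        conv_lhs => rw [show j = 1 + (j - 1) by omega]
        exact List.take_add (i := 1) (j := j-1)
      have e3 : (y.drop i).drop 1 = y.drop (i+1) := by
        rw [List.drop_drop, Nat.add_comm]
      rw [e1, e2, e3, hxy]
      simp [List.append_assoc]
    by_cases hdiff : ∃ x ∈ C, ∃ y ∈ C, (x.drop i).take 1 = (y.drop i).take 1 ∧
        (x.drop (i+1)).take (j-1) ≠ (y.drop (i+1)).take (j-1)
    · obtain ⟨x, hx, y, hy, hhead, hne⟩ := hdiff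
      refine ⟨i+1, j-1, by omega, by omega, by omega, by omega, by omega,
        x, (Finset.mem_filter.1 hx).1, y, (Finset.mem_filter.1 hy).1, hne, ?_, ?_⟩
      · rw [hshift x y hhead]
        exact hswap x hx y hy
      · rw [hshift y x hhead.symm]
        exact hswap y hy x hx
    · exfalso
      push_neg at hdiff
      set v : List σ → List σ := fun x => (x.drop i).take 1 with hv
      have hCsum : C.card = ∑ w ∈ C.image v, (C.filter fun x => v x = w).card :=
        Finset.card_eq_sum_card_fiberwise (fun x hx => Finset.mem_image_of_mem v hx)
      have himgcard : (C.image v).card ≤ Fintype.card σ := by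
        have hsub : C.image v ⊆ Finset.univ.image (fun a : σ => [a]) := by
          intro w hw
          obtain ⟨x, hx, rfl⟩ := Finset.mem_image.1 hw
          have hxlen : x.length = n := (hS x (Finset.mem_filter.1 hx).1).2
          have hne : x.drop i ≠ [] := by
            intro hnil
            have := congrArg List.length hnil
            simp only [List.length_drop, List.length_nil, hxlen] at this
            omega
          obtain ⟨b, l, hbl⟩ := List.exists_cons_of_ne_nil hne
          simp only [hv, hbl]
          simp
        calc (C.image v).card ≤ _ := Finset.card_le_card hsub
          _ ≤ Fintype.card σ := Finset.card_image_le.trans (by simp)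
      have hfiber : ∀ w ∈ C.image v, (C.filter fun x => v x = w).card * M ≤ S.card := by
        intro w hw
        obtain ⟨z, hz, rfl⟩ := Finset.mem_image.1 hw
        set uz := (z.drop (i+1)).take j₀ with huz
        have hzlen : z.length = n := (hS z (Finset.mem_filter.1 hz).1).2
        have hulen : uz.length = j₀ := by
          rw [huz, List.length_take, List.length_drop, hzlen]; omega
        have hsub2 : (C.filter fun x => v x = v z)
            ⊆ S.filter (fun x => (x.drop (i+1)).take j₀ = uz) := by
          intro x hx
          obtain ⟨hxC, hvx⟩ := Finset.mem_filter.1 hx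
          refine Finset.mem_filter.2 ⟨(Finset.mem_filter.1 hxC).1, ?_⟩
          have heq := hdiff x hxC z hz hvx
          have h1 : (x.drop (i+1)).take j₀ = ((x.drop (i+1)).take (j-1)).take j₀ := by
            rw [List.take_take]; congr 1; omega
          have h2 : (z.drop (i+1)).take j₀ = ((z.drop (i+1)).take (j-1)).take j₀ := by
            rw [List.take_take]; congr 1; omega
          rw [huz, h1, heq, ← h2]
        have hH := H (i+1) (by omega) (by omega) uz hulen
        calc (C.filter fun x => v x = v z).card * M
            ≤ (S.filter (fun x => (x.drop (i+1)).take j₀ = uz)).card * M :=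
              Nat.mul_le_mul_right M (Finset.card_le_card hsub2)
          _ ≤ S.card := le_of_lt hH
      have hCM : C.card * M ≤ Fintype.card σ * S.card := by
        calc C.card * M = ∑ w ∈ C.image v, (C.filter fun x => v x = w).card * M := by
              rw [hCsum, Finset.sum_mul]
          _ ≤ ∑ _w ∈ C.image v, S.card := Finset.sum_le_sum hfiber
          _ = (C.image v).card * S.card := by rw [Finset.sum_const, smul_eq_mul]
          _ ≤ Fintype.card σ * S.card := Nat.mul_le_mul_right _ himgcard
      have hstrict : Fintype.card σ * NC < m := by omega
      have hpos : 0 < ((n - j₀ + 1) * (k - j₀ + 1)) * C.card := by positivity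
      have : Fintype.card σ * S.card < Fintype.card σ * S.card := by
        calc Fintype.card σ * S.card
            ≤ Fintype.card σ * (NC * ((n - j₀ + 1) * (k - j₀ + 1)) * C.card) :=
              Nat.mul_le_mul_left _ hSB
          _ = (Fintype.card σ * NC) * (((n - j₀ + 1) * (k - j₀ + 1)) * C.card) := by ring
          _ < m * (((n - j₀ + 1) * (k - j₀ + 1)) * C.card) :=
              mul_lt_mul_of_pos_right hstrict hpos
          _ = C.card * M := by rw [hM]; ring
          _ ≤ Fintype.card σ * S.card := hCM
      omega
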